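/- Let n ≥ 3 be an integer and A an infinite integral domain of finite Krull dimension whose Jacobson radical is trivial. Let 𝔮 ◁ A be a maximal ideal and let α ∈ SL_n(A) with α ∉ SL*_n(A;𝔮). Then gcl_{SL_n(A)}(α)^{32} ∩ U(A) is not contained in U(A;𝔮); that is, there exists a matrix u ∈ U(A) which is a product of 32 elements of gcl_{SL_n(A)}(α) and which is not congruent to the identity modulo 𝔮. -/

import Mathlib

open scoped Pointwise

/-- The elementary matrix `e_{i,j}(a) ∈ SL_n(A)`. -/
def elemSL {n : ℕ} {A : Type*} [CommRing A] (i j : Fin n) (hij : i ≠ j) (a : A) :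
    Matrix.SpecialLinearGroup (Fin n) A :=
  ⟨Matrix.transvection i j a, Matrix.det_transvection_of_ne i j hij a⟩

/-- `gcl_Γ(α) = {βαβ⁻¹, βα⁻¹β⁻¹, 1 : β ∈ Γ}`. -/
def gcl {Γ : Type*} [Group Γ] (α : Γ) : Set Γ :=
  {g | g = 1 ∨ ∃ β : Γ, g = β * α * β⁻¹ ∨ g = β * α⁻¹ * β⁻¹}

/-- `U(A) = E_{1,2}(A) E_{1,3}(A) ⋯ E_{1,n}(A)`, the set of upper unitriangular matrices
supported on the first row. -/
def Uset (n : ℕ) (hn : 0 < n) (A : Type*) [CommRing A] :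
    Set (Matrix.SpecialLinearGroup (Fin n) A) :=
  {g | ∃ b : Fin n → A, ∀ i j, (g : Matrix (Fin n) (Fin n) A) i j =
    if i = j then 1 else if i = (⟨0, hn⟩ : Fin n) then b j else 0}

set_option linter.unusedSectionVars false
set_option maxHeartbeats 1000000

namespace LemA3

open Matrix

section MatrixAux

variable {n : Type*} [Fintype n] [DecidableEq n] {R : Type*} [CommRing R]

lemma vvmul (u w x y : n → R) :
    vecMulVec u w * vecMulVec x y = (w ⬝ᵥ x) • vecMulVec u y := by
  ext i j
  simp only [Matrix.mul_apply, vecMulVec_apply, Matrix.smul_apply, dotProduct,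
    Finset.sum_mul, smul_eq_mul]
  exact Finset.sum_congr rfl fun k _ => by ring

lemma Mvv (M : Matrix n n R) (x y : n → R) :
    M * vecMulVec x y = vecMulVec (M *ᵥ x) y := by
  ext i j
  simp only [Matrix.mul_apply, vecMulVec_apply, mulVec, dotProduct, Finset.sum_mul]
  exact Finset.sum_congr rfl fun k _ => by ring

lemma vvM (M : Matrix n n R) (x y : n → R) :
    vecMulVec x y * M = vecMulVec x (y ᵥ* M) := by
  ext i j
  simp only [Matrix.mul_apply, vecMulVec_apply, vecMul, dotProduct, Finset.mul_sum]
  exact Finset.sum_congr rfl fun k _ => by ring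

lemma vv_mulVec (u w x : n → R) : vecMulVec u w *ᵥ x = (w ⬝ᵥ x) • u := by
  ext i
  simp only [mulVec, dotProduct, vecMulVec_apply, Pi.smul_apply, smul_eq_mul]
  rw [Finset.sum_mul]
  exact Finset.sum_congr rfl fun k _ => by ring

lemma vv_smul_right (u y : n → R) (s : R) : vecMulVec u (s • y) = s • vecMulVec u y := by
  ext i j; simp [vecMulVec_apply, Pi.smul_apply, smul_eq_mul]; ring

-- conjugation: M * (1+V) * B = 1 + M*V*B when M*B = 1
lemma conj_one_add {M B V : Matrix n n R} (h : M * B = 1) :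
    M * (1 + V) * B = 1 + M * V * B := by
  rw [mul_add, mul_one, add_mul, h]

lemma conj_one_sub {M B V : Matrix n n R} (h : M * B = 1) :
    M * (1 - V) * B = 1 - M * V * B := by
  rw [mul_sub, mul_one, sub_mul, h]

-- sandwich lemma
lemma sandwich {P Q : Matrix n n R} (hQP : Q * P = 0) (hPQ : P * Q = 0) (hQQ : Q * Q = 0)
    (S : Matrix n n R) :
    (1 - Q) * ((1 + P) * ((1 + Q) * S)) = (1 + P) * S := by
  have h1 : (1 + P) * (1 + Q) = 1 + P + Q + P * Q := by
    rw [mul_add, mul_one, add_mul, one_mul]; abel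
  have key : (1 - Q) * ((1 + P) * (1 + Q)) = 1 + P := by
    rw [h1, sub_mul, one_mul, mul_add, mul_add, mul_add, mul_one, hQP, hQQ, ← mul_assoc,
      hQP, zero_mul, hPQ]
    abel
  calc (1 - Q) * ((1 + P) * ((1 + Q) * S)) = ((1 - Q) * ((1 + P) * (1 + Q))) * S := by
        simp only [mul_assoc]
    _ = (1 + P) * S := by rw [key]

-- MAIN identity
lemma main_id (u w x y : n → R) (hwu : w ⬝ᵥ u = 0) (hyx : y ⬝ᵥ x = 0) (hyu : y ⬝ᵥ u = 0) :
    (1 + vecMulVec u w) * ((1 + vecMulVec x y) *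
      ((1 - vecMulVec u w) * (1 - vecMulVec x y))) =
    1 + (w ⬝ᵥ x) • vecMulVec u y := by
  set X := vecMulVec u w with hX
  set F := vecMulVec x y with hF
  set S := (w ⬝ᵥ x) • vecMulVec u y with hS
  have hXX : X * X = 0 := by rw [hX, vvmul, hwu, zero_smul]
  have hFF : F * F = 0 := by rw [hF, vvmul, hyx, zero_smul]
  have hFX : F * X = 0 := by rw [hF, hX, vvmul, hyu, zero_smul]
  have hXF : X * F = S := by rw [hX, hF, vvmul, hS]
  have hSX : S * X = 0 := by
    rw [hS, hX, smul_mul_assoc, vvmul, hyu, zero_smul, smul_zero]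
  have hSF : S * F = 0 := by
    rw [hS, hF, smul_mul_assoc, vvmul, hyx, zero_smul, smul_zero]
  have e1 : (1 + X) * (1 + F) = 1 + X + F + S := by
    rw [mul_add, mul_one, add_mul, one_mul, hXF]; abel
  have e2 : (1 + X + F + S) * (1 - X) = 1 + F + S := by
    rw [mul_sub, mul_one, add_mul, add_mul, add_mul, one_mul, hXX, hFX, hSX]
    abel
  have e3 : (1 + F + S) * (1 - F) = 1 + S := by
    rw [mul_sub, mul_one, add_mul, add_mul, one_mul, hFF, hSF]
    abel
  calc (1 + X) * ((1 + F) * ((1 - X) * (1 - F)))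
      = (((1 + X) * (1 + F)) * (1 - X)) * (1 - F) := by simp only [mul_assoc]
    _ = 1 + S := by rw [e1, e2, e3]

end MatrixAux

section gclsec
variable {Γ : Type*} [Group Γ] (α : Γ)

lemma gcl_one : (1 : Γ) ∈ gcl α := Or.inl rfl

lemma gcl_conj (β : Γ) : β * α * β⁻¹ ∈ gcl α := Or.inr ⟨β, Or.inl rfl⟩

lemma gcl_conj_inv (β : Γ) : β * α⁻¹ * β⁻¹ ∈ gcl α := Or.inr ⟨β, Or.inr rfl⟩

lemma gcl_conj_mem {x : Γ} (hx : x ∈ gcl α) (β : Γ) : β * x * β⁻¹ ∈ gcl α := by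
  rcases hx with h | ⟨γ, h | h⟩
  · subst h; simpa using gcl_one α
  · subst h
    have := gcl_conj α (β * γ)
    simpa [mul_assoc] using this
  · subst h
    have := gcl_conj_inv α (β * γ)
    simpa [mul_assoc] using this

lemma gcl_inv_mem {x : Γ} (hx : x ∈ gcl α) : x⁻¹ ∈ gcl α := by
  rcases hx with h | ⟨γ, h | h⟩
  · subst h; simpa using gcl_one α
  · subst h
    have := gcl_conj_inv α γ
    simpa [mul_assoc] using this
  · subst h
    have := gcl_conj α γ
    simpa [mul_assoc] using this

lemma gcl_mem_pow_one {x : Γ} (hx : x ∈ gcl α) : x ∈ gcl α ^ 1 := by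
  rwa [pow_one]

lemma gcl_pow_mul {x y : Γ} {j k : ℕ} (hx : x ∈ gcl α ^ j) (hy : y ∈ gcl α ^ k) :
    x * y ∈ gcl α ^ (j + k) := by
  rw [pow_add]
  exact Set.mul_mem_mul hx hy

lemma gcl_pow_conj {x : Γ} {j : ℕ} (hx : x ∈ gcl α ^ j) (β : Γ) :
    β * x * β⁻¹ ∈ gcl α ^ j := by
  induction j generalizing x with
  | zero =>
    rw [pow_zero] at hx ⊢
    simp only [Set.mem_one] at hx ⊢
    subst hx; simp
  | succ m ih =>
    rw [pow_succ] at hx ⊢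
    obtain ⟨a, ha, b, hb, hab⟩ := hx
    refine ⟨β * a * β⁻¹, ih ha, β * b * β⁻¹, gcl_conj_mem α hb β, ?_⟩
    rw [← hab]; group

lemma gcl_pow_inv {x : Γ} {j : ℕ} (hx : x ∈ gcl α ^ j) : x⁻¹ ∈ gcl α ^ j := by
  induction j generalizing x with
  | zero =>
    rw [pow_zero] at hx ⊢
    simp only [Set.mem_one] at hx ⊢
    subst hx; simp
  | succ m ih =>
    rw [pow_succ] at hx
    obtain ⟨a, ha, b, hb, hab⟩ := hx
    rw [pow_succ']
    exact ⟨b⁻¹, gcl_inv_mem α hb, a⁻¹, ih ha, by rw [← hab]; group⟩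

lemma gcl_pow_pad {x : Γ} {j k : ℕ} (hx : x ∈ gcl α ^ j) (hjk : j ≤ k) :
    x ∈ gcl α ^ k := by
  obtain ⟨m, rfl⟩ := Nat.exists_eq_add_of_le hjk
  induction m with
  | zero => simpa using hx
  | succ l ih =>
    have hx1 : x = x * 1 := by simp
    rw [hx1, show j + (l+1) = (j+l) + 1 from rfl, pow_succ]
    exact Set.mul_mem_mul (ih (by omega)) (gcl_one α)

end gclsec

section SLAux

variable {n : ℕ} {R : Type*} [CommRing R]

/-- unipotent SL element 1 + x yᵀ with yᵀx = 0 -/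
def uniSL (x y : Fin n → R) (h : y ⬝ᵥ x = 0) :
    Matrix.SpecialLinearGroup (Fin n) R :=
  ⟨1 + vecMulVec x y, by
    rw [vecMulVec_eq (Fin 1), det_one_add_replicateCol_mul_replicateRow, h, add_zero]⟩

lemma uniSL_coe (x y : Fin n → R) (h : y ⬝ᵥ x = 0) :
    (uniSL x y h).val = 1 + vecMulVec x y := rfl

lemma vvsq (x y : Fin n → R) (h : y ⬝ᵥ x = 0) :
    vecMulVec x y * vecMulVec x y = 0 := by
  rw [vvmul, h, zero_smul]

lemma uniSL_inv_coe (x y : Fin n → R) (h : y ⬝ᵥ x = 0) :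
    ((uniSL x y h)⁻¹).val = 1 - vecMulVec x y := by
  have h' : y ⬝ᵥ (-x) = 0 := by rw [dotProduct_neg, h, neg_zero]
  have hneg : vecMulVec (-x) y = -vecMulVec x y := by ext i j; simp [vecMulVec_apply]
  have key : uniSL x y h * uniSL (-x) y h' = 1 := by
    apply Subtype.ext
    show (1 + vecMulVec x y) * (1 + vecMulVec (-x) y) = 1
    rw [hneg, ← sub_eq_add_neg]
    have hsq := vvsq x y h
    rw [mul_sub, mul_one, add_mul, one_mul, hsq]
    abel
  have : (uniSL x y h)⁻¹ = uniSL (-x) y h' := inv_eq_of_mul_eq_one_right key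
  rw [this]
  show (1 : Matrix (Fin n) (Fin n) R) + vecMulVec (-x) y = 1 - vecMulVec x y
  rw [hneg, sub_eq_add_neg]

/-- If every vector with first coordinate 1 is an eigenvector, the matrix is scalar. -/
lemma scalar_of_eigen (hn : 3 ≤ n) (M : Matrix (Fin n) (Fin n) R)
    (H : ∀ v : Fin n → R, v ⟨0, lt_of_lt_of_le (by norm_num) hn⟩ = 1 → ∃ c : R, M *ᵥ v = c • v) :
    ∃ c : R, M = c • (1 : Matrix (Fin n) (Fin n) R) := by
  set i0 : Fin n := ⟨0, by omega⟩ with hi0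
  set e : Fin n → Fin n → R := fun i => Pi.single i 1 with he
  obtain ⟨c0, hc0⟩ := H (e i0) (by simp [he])
  have col0 : ∀ r, M r i0 = c0 * e i0 r := by
    intro r
    have := congrFun hc0 r
    simpa [mulVec_single, he] using this
  refine ⟨c0, ?_⟩
  have colgen : ∀ i, ∀ r, M r i = c0 * e i r := by
    intro i
    by_cases hi : i = i0
    · subst hi; exact col0
    · have h1 : (1 : ℕ) < n := by omega
      have h2 : (2 : ℕ) < n := by omega
      set j : Fin n := if i = ⟨1, h1⟩ then ⟨2, h2⟩ else ⟨1, h1⟩ with hj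
      have hji0 : j ≠ i0 := by
        rw [hj]; split <;> (intro hcon; rw [Fin.ext_iff] at hcon; simp [hi0] at hcon)
      have hji : j ≠ i := by
        rw [hj]; split
        · rename_i hcase; rw [hcase]; intro hcon; rw [Fin.ext_iff] at hcon; simp at hcon
        · rename_i hcase; intro hcon; exact hcase hcon.symm
      obtain ⟨ci, hci⟩ := H (e i0 + e i) (by simp [he, Pi.single_apply, hi, Ne.symm hi])
      obtain ⟨cj, hcj⟩ := H (e i0 + e j) (by simp [he, Pi.single_apply, hji0, Ne.symm hji0])
      obtain ⟨d, hd⟩ := H (e i0 + e i + e j)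
        (by simp [he, Pi.single_apply, hi, Ne.symm hi, hji0, Ne.symm hji0])
      have hci' : ∀ r, M r i0 + M r i = ci * (e i0 r + e i r) := by
        intro r
        have := congrFun hci r
        simpa [mulVec_add, mulVec_single, he] using this
      have hcj' : ∀ r, M r i0 + M r j = cj * (e i0 r + e j r) := by
        intro r
        have := congrFun hcj r
        simpa [mulVec_add, mulVec_single, he] using this
      have hd' : ∀ r, M r i0 + M r i + M r j = d * (e i0 r + e i r + e j r) := by
        intro r
        have := congrFun hd r
        simpa [mulVec_add, mulVec_single, he] using this
      have Mii : M i i = ci := by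
        have := hci' i
        simp [he, Pi.single_apply, Ne.symm hi] at this
        have c0i := col0 i
        simp [he, Pi.single_apply, Ne.symm hi] at c0i
        rw [c0i, zero_add] at this; exact this
      have Mij : M i j = 0 := by
        have := hcj' i
        simp [he, Pi.single_apply, Ne.symm hi, hji] at this
        have c0i := col0 i
        simp [he, Pi.single_apply, Ne.symm hi] at c0i
        rw [c0i, zero_add] at this; exact this
      have Mjj : M j j = cj := by
        have := hcj' j
        simp [he, Pi.single_apply, Ne.symm hji0] at this
        have c0j := col0 j
        simp [he, Pi.single_apply, Ne.symm hji0] at c0j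
        rw [c0j, zero_add] at this; exact this
      have Mji : M j i = 0 := by
        have := hci' j
        simp [he, Pi.single_apply, Ne.symm hji0, Ne.symm hji] at this
        have c0j := col0 j
        simp [he, Pi.single_apply, Ne.symm hji0] at c0j
        rw [c0j, zero_add] at this; exact this
      have hdi : ci = d := by
        have := hd' i
        simp [he, Pi.single_apply, Ne.symm hi, hji] at this
        have c0i := col0 i
        simp [he, Pi.single_apply, Ne.symm hi] at c0i
        rw [c0i, Mii, Mij] at this
        simpa using this
      have hdj : cj = d := by
        have := hd' j
        simp [he, Pi.single_apply, Ne.symm hji0, Ne.symm hji] at this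
        have c0j := col0 j
        simp [he, Pi.single_apply, Ne.symm hji0] at c0j
        rw [c0j, Mjj, Mji] at this
        simpa using this
      have hM0i : M i0 i = ci - c0 := by
        have := hci' i0
        simp [he, Pi.single_apply, hi] at this
        have c00 := col0 i0
        simp [he, Pi.single_apply] at c00
        rw [c00] at this
        linear_combination this
      have hM0j : M i0 j = cj - c0 := by
        have := hcj' i0
        simp [he, Pi.single_apply, hji0] at this
        have c00 := col0 i0
        simp [he, Pi.single_apply] at c00
        rw [c00] at this
        linear_combination this
      have hd0 : c0 = d := by
        have := hd' i0
        simp [he, Pi.single_apply, hi, hji0] at this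
        have c00 := col0 i0
        simp [he, Pi.single_apply] at c00
        rw [c00, hM0i, hM0j, hdi, hdj] at this
        linear_combination -this
      have hcic0 : ci = c0 := by rw [hdi, hd0]
      intro r
      have hrr := hci' r
      have c0r := col0 r
      rw [c0r] at hrr
      have : M r i = ci * (e i0 r + e i r) - c0 * e i0 r := by linear_combination hrr
      rw [this, hcic0]
      ring
  ext r s
  rw [colgen s r]
  simp [he, Matrix.one_apply, Pi.single_apply, mul_comm]

lemma mapvec {S : Type*} [CommRing S] (φ : R →+* S) (M : Matrix (Fin n) (Fin n) R)
    (x : Fin n → R) :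
    (M.map φ) *ᵥ (fun i => φ (x i)) = fun i => φ ((M *ᵥ x) i) := by
  funext r
  simp only [mulVec, dotProduct, Matrix.map_apply]
  rw [map_sum]
  simp [_root_.map_mul]

end SLAux

end LemA3

open LemA3 Matrix

/-- Lemma A.3: if `α ∉ SL*_n(A;𝔮)` for a maximal ideal `𝔮`, then
`gcl(α)^32 ∩ U(A)` is not contained in `U(A;𝔮)`. -/
theorem gcl_pow_inter_U_not_subset (n : ℕ) (hn : 3 ≤ n)
    (A : Type*) [CommRing A] [IsDomain A] [Infinite A]
    (hdim : ringKrullDim A ≠ ⊤)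
    (hjac : Ideal.jacobson (⊥ : Ideal A) = ⊥)
    (𝔮 : Ideal A) (hq : 𝔮.IsMaximal)
    (α : Matrix.SpecialLinearGroup (Fin n) A)
    (hα : Matrix.SpecialLinearGroup.map (Ideal.Quotient.mk 𝔮) α ∉
      Subgroup.center (Matrix.SpecialLinearGroup (Fin n) (A ⧸ 𝔮))) :
    ∃ u ∈ gcl α ^ (32 : ℕ), u ∈ Uset n (by omega) A ∧
      Matrix.SpecialLinearGroup.map (Ideal.Quotient.mk 𝔮) u ≠ 1 := by
  haveI := hq
  set φ := Ideal.Quotient.mk 𝔮 with hφ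
  set i0 : Fin n := ⟨0, by omega⟩ with hi0
  set mA : Matrix (Fin n) (Fin n) (A ⧸ 𝔮) := (α.val).map φ with hmA
  have hmapcoe : ∀ g : Matrix.SpecialLinearGroup (Fin n) A,
      (Matrix.SpecialLinearGroup.map φ g).val = (g.val).map φ := by
    intro g
    simp [Matrix.SpecialLinearGroup.map_apply_coe, RingHom.mapMatrix_apply]
  -- α mod 𝔮 is not scalar
  have hnotscalar : ¬ ∃ c : A ⧸ 𝔮, mA = c • (1 : Matrix (Fin n) (Fin n) (A ⧸ 𝔮)) := by
    rintro ⟨c, hc⟩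
    apply hα
    rw [Matrix.SpecialLinearGroup.mem_center_iff]
    refine ⟨c, ?_, ?_⟩
    · have hdet : ((Matrix.SpecialLinearGroup.map φ α).val).det = 1 :=
        (Matrix.SpecialLinearGroup.map φ α).2
      rw [hmapcoe, ← hmA, hc] at hdet
      simpa using hdet
    · rw [hmapcoe, ← hmA, hc]
      rw [smul_one_eq_diagonal]
      rfl
  -- there is a vector with first coordinate 1 which is not an eigenvector mod 𝔮
  have hvex : ∃ v : Fin n → A ⧸ 𝔮, v i0 = 1 ∧ ¬ ∃ c : A ⧸ 𝔮, mA *ᵥ v = c • v := by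
    by_contra hcon
    push_neg at hcon
    exact hnotscalar (scalar_of_eigen hn mA fun v hv => hcon v hv)
  obtain ⟨vb, hvb0, hvb⟩ := hvex
  -- lift vb to A
  have lift : ∀ t : A ⧸ 𝔮, ∃ s : A, φ s = t := Ideal.Quotient.mk_surjective
  set v : Fin n → A := fun i => if i = i0 then 1 else (lift (vb i)).choose with hv
  have hφv : ∀ i, φ (v i) = vb i := by
    intro i
    by_cases h : i = i0
    · subst h; simp [hv, hvb0.symm]
    · simp only [hv, if_neg h]
      exact (lift (vb i)).choose_spec
  have hv0 : v i0 = 1 := by simp [hv]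
  set e0A : Fin n → A := Pi.single i0 1 with he0A
  set z : Fin n → A := v - e0A with hz
  have hz0 : z i0 = 0 := by simp [hz, hv0, he0A]
  have hze : e0A ⬝ᵥ z = 0 := by
    rw [he0A, single_dotProduct, one_mul]
    exact hz0
  set Dg := uniSL z e0A hze with hDg
  set A' := Dg⁻¹ * α * (Dg⁻¹)⁻¹ with hA'
  set B : Matrix (Fin n) (Fin n) A := (A'⁻¹).val with hB
  have hAB : A'.val * B = 1 := by
    rw [hB, ← Matrix.SpecialLinearGroup.coe_mul]
    simp
  have hBA : B * A'.val = 1 := by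
    rw [hB, ← Matrix.SpecialLinearGroup.coe_mul]
    simp
  set u : Fin n → A := A'.val *ᵥ e0A with hu
  -- transport identities to the quotient
  set e0k : Fin n → A ⧸ 𝔮 := Pi.single i0 1 with he0kd
  have he0k : (fun i => φ (e0A i)) = e0k := by
    funext i
    simp [he0A, he0kd, Pi.single_apply, apply_ite φ]
  have hDA : Dg.val * A'.val = α.val * Dg.val := by
    have : Dg * A' = α * Dg := by rw [hA']; group
    calc Dg.val * A'.val = (Dg * A').val := rfl
      _ = (α * Dg).val := by rw [this]
      _ = α.val * Dg.val := rfl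
  have hve : Dg.val *ᵥ e0A = v := by
    rw [hDg, uniSL_coe, add_mulVec, one_mulVec, vv_mulVec, he0A, single_dotProduct, one_mul,
      Pi.single_eq_same, one_smul, ← he0A, hz]
    abel
  -- choice of a
  have hDv : (Dg.val.map φ) *ᵥ (fun i => φ (e0A i)) = vb := by
    rw [mapvec φ Dg.val e0A]
    funext i
    rw [hve, hφv]
  have ha : ∃ a, a ≠ i0 ∧ φ (u a) ≠ 0 := by
    by_contra hconn
    push_neg at hconn
    apply hvb
    refine ⟨φ (u i0), ?_⟩
    have hφu : (fun i => φ (u i)) = φ (u i0) • e0k := by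
      funext i
      rw [Pi.smul_apply, he0kd, Pi.single_apply, smul_eq_mul]
      by_cases h : i = i0
      · subst h; simp
      · rw [if_neg h, mul_zero]; exact hconn i h
    have step2 : mA * Dg.val.map φ = Dg.val.map φ * A'.val.map φ := by
      rw [hmA, ← _root_.Matrix.map_mul, ← _root_.Matrix.map_mul, ← hDA]
    have step3 : (A'.val.map φ) *ᵥ (fun i => φ (e0A i)) = fun i => φ (u i) := by
      rw [mapvec φ A'.val e0A]
    calc mA *ᵥ vb
        = mA *ᵥ ((Dg.val.map φ) *ᵥ (fun i => φ (e0A i))) := by rw [hDv]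
      _ = (mA * Dg.val.map φ) *ᵥ (fun i => φ (e0A i)) := by rw [mulVec_mulVec]
      _ = (Dg.val.map φ * A'.val.map φ) *ᵥ (fun i => φ (e0A i)) := by rw [step2]
      _ = (Dg.val.map φ) *ᵥ ((A'.val.map φ) *ᵥ (fun i => φ (e0A i))) := by
          rw [mulVec_mulVec]
      _ = (Dg.val.map φ) *ᵥ (φ (u i0) • e0k) := by rw [step3, hφu]
      _ = φ (u i0) • ((Dg.val.map φ) *ᵥ e0k) := by rw [mulVec_smul]
      _ = φ (u i0) • vb := by rw [← he0k, hDv]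
  obtain ⟨a, hai0, hua⟩ := ha
  -- choice of q
  have hqex : ∃ qq, qq ≠ i0 ∧ φ (B qq i0) ≠ 0 := by
    by_contra hconn
    push_neg at hconn
    have hBcol : (B.map φ) *ᵥ e0k = φ (B i0 i0) • e0k := by
      conv_lhs => rw [← he0k]
      rw [mapvec φ B e0A]
      funext r
      have hBr : (B *ᵥ e0A) r = B r i0 := by
        simp [he0A]
      rw [hBr, Pi.smul_apply, he0kd, Pi.single_apply, smul_eq_mul]
      by_cases h : r = i0
      · subst h; simp
      · rw [if_neg h, mul_zero]; exact hconn r h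
    have hone : (e0k) = φ (B i0 i0) • (fun i => φ (u i)) := by
      calc e0k = ((A'.val * B).map φ) *ᵥ e0k := by
            rw [hAB]; simp [one_mulVec]
        _ = (A'.val.map φ * B.map φ) *ᵥ e0k := by
            rw [_root_.Matrix.map_mul]
        _ = (A'.val.map φ) *ᵥ ((B.map φ) *ᵥ e0k) := by
            rw [← mulVec_mulVec]
        _ = (A'.val.map φ) *ᵥ (φ (B i0 i0) • e0k) := by rw [hBcol]
        _ = φ (B i0 i0) • ((A'.val.map φ) *ᵥ e0k) := by
            rw [mulVec_smul]
        _ = φ (B i0 i0) • (fun i => φ (u i)) := by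
            rw [← he0k, mapvec φ A'.val e0A, ← hu]
    have h1 := congrFun hone a
    simp only [he0kd, Pi.single_apply, if_neg hai0, Pi.smul_apply, smul_eq_mul] at h1
    rcases mul_eq_zero.mp h1.symm with hc | hc
    · have h2 := congrFun hone i0
      simp only [he0kd, Pi.single_eq_same, Pi.smul_apply, smul_eq_mul, hc, zero_mul] at h2
      exact one_ne_zero h2
    · exact hua hc
  obtain ⟨qq, hqqi0, hBq⟩ := hqex
  -- choice of b
  have h1n : (1 : ℕ) < n := by omega
  have h2n : (2 : ℕ) < n := by omega
  set b : Fin n := if a = ⟨1, h1n⟩ then ⟨2, h2n⟩ else ⟨1, h1n⟩ with hb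
  have hbi0 : b ≠ i0 := by
    rw [hb]; split <;> (intro hcon; rw [Fin.ext_iff] at hcon; simp [hi0] at hcon)
  have hba : b ≠ a := by
    rw [hb]; split
    · rename_i hcase; rw [hcase]; intro hcon; rw [Fin.ext_iff] at hcon; simp at hcon
    · rename_i hcase; intro hcon; exact hcase hcon.symm
  -- the vectors of the construction
  set eA : Fin n → Fin n → A := fun i => Pi.single i 1 with heA
  set w : Fin n → A := eA qq ᵥ* B with hw
  have hwi0 : w i0 = B qq i0 := by
    simp [hw, heA]
  set y : Fin n → A := u b • eA a - u a • eA b with hy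
  have hyi0 : y i0 = 0 := by
    simp [hy, heA, Pi.single_apply, Ne.symm hai0, Ne.symm hbi0]
  have hyu : y ⬝ᵥ u = 0 := by
    rw [hy, sub_dotProduct, smul_dotProduct, smul_dotProduct, heA,
      single_dotProduct, single_dotProduct, one_mul, one_mul, smul_eq_mul, smul_eq_mul]
    ring
  have hyb : y b = - u a := by
    simp [hy, heA, Pi.single_apply, hba]
  have hye0 : y ⬝ᵥ e0A = 0 := by
    rw [he0A, dotProduct_single, mul_one]
    exact hyi0
  have hwu : w ⬝ᵥ u = 0 := by
    rw [hu, dotProduct_mulVec, hw, vecMul_vecMul, hBA, vecMul_one, heA, single_dotProduct,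
      one_mul, he0A, Pi.single_apply, if_neg hqqi0]
  have hqe : eA qq ⬝ᵥ e0A = 0 := by
    rw [heA, single_dotProduct, one_mul, he0A, Pi.single_apply, if_neg hqqi0]
  have hae : eA a ⬝ᵥ e0A = 0 := by
    rw [heA, single_dotProduct, one_mul, he0A, Pi.single_apply, if_neg hai0]
  -- the group elements
  set E := uniSL e0A (eA qq) hqe with hE
  set F2 := uniSL e0A y hye0 with hF2
  set F3 := uniSL e0A (eA a) hae with hF3
  set g1 := A' * E * A'⁻¹ * E⁻¹ with hg1
  set g2 := g1 * F2 * g1⁻¹ * F2⁻¹ with hg2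
  set g3 := F3 * g2 * F3⁻¹ * g2⁻¹ with hg3
  -- matrix identities
  set Zq : Matrix (Fin n) (Fin n) A := vecMulVec e0A (eA qq) with hZq
  set X : Matrix (Fin n) (Fin n) A := vecMulVec u w with hX
  set Fm : Matrix (Fin n) (Fin n) A := vecMulVec e0A y with hFm
  have hconj1 : A'.val * E.val * B = 1 + X := by
    rw [hE, uniSL_coe, conj_one_add hAB, Mvv, vvM, ← hu, ← hw, hX]
  have hconj2 : A'.val * (E⁻¹).val * B = 1 - X := by
    rw [hE, uniSL_inv_coe, conj_one_sub hAB, Mvv, vvM, ← hu, ← hw, hX]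
  have hg1v : g1.val = (1 + X) * (1 - Zq) := by
    calc g1.val = ((A'.val * E.val) * B) * (E⁻¹).val := rfl
      _ = (1 + X) * (1 - Zq) := by rw [hconj1, hE, uniSL_inv_coe]
  have hg1inv : g1⁻¹ = E * A' * E⁻¹ * A'⁻¹ := by rw [hg1]; group
  have hg1iv : (g1⁻¹).val = (1 + Zq) * (1 - X) := by
    have hv1 : (g1⁻¹).val = ((E.val * A'.val) * (E⁻¹).val) * B := by rw [hg1inv]; rfl
    rw [hv1, mul_assoc (E.val) (A'.val) ((E⁻¹).val),
      mul_assoc (E.val) (A'.val * (E⁻¹).val) B, hconj2, hE, uniSL_coe]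
  -- relations for the sandwich
  have hZF : Zq * Fm = 0 := by rw [hZq, hFm, vvmul, hqe, zero_smul]
  have hFZ : Fm * Zq = 0 := by rw [hFm, hZq, vvmul, hye0, zero_smul]
  have hZZ : Zq * Zq = 0 := by rw [hZq, vvmul, hqe, zero_smul]
  set s : A := w ⬝ᵥ e0A with hs
  have hsB : s = B qq i0 := by rw [hs, he0A, dotProduct_single, mul_one, hwi0]
  have hg2v : g2.val = 1 + s • vecMulVec u y := by
    have hv1 : g2.val = ((g1.val * F2.val) * (g1⁻¹).val) * (F2⁻¹).val := rfl
    rw [hv1, hg1v, hg1iv, hF2, uniSL_coe, uniSL_inv_coe, ← hFm]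
    calc ((((1 + X) * (1 - Zq)) * (1 + Fm)) * ((1 + Zq) * (1 - X))) * (1 - Fm)
        = (1 + X) * ((1 - Zq) * ((1 + Fm) * ((1 + Zq) * ((1 - X) * (1 - Fm))))) := by
          simp only [mul_assoc]
      _ = (1 + X) * ((1 + Fm) * ((1 - X) * (1 - Fm))) := by
          rw [sandwich hZF hFZ hZZ]
      _ = 1 + s • vecMulVec u y := by
          rw [hX, hFm, main_id u w e0A y hwu hye0 hyu, hs]
  have hsyu : (s • y) ⬝ᵥ u = 0 := by rw [smul_dotProduct, hyu, smul_zero]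
  have hg2eq : g2 = uniSL u (s • y) hsyu := by
    apply Subtype.ext
    rw [hg2v, uniSL_coe, vv_smul_right]
  have hg2iv : (g2⁻¹).val = 1 - s • vecMulVec u y := by
    rw [hg2eq, uniSL_inv_coe, vv_smul_right]
  have hsye0 : (s • y) ⬝ᵥ e0A = 0 := by rw [smul_dotProduct, hye0, smul_zero]
  have hg3v' : g3.val = 1 + (eA a ⬝ᵥ u) • vecMulVec e0A (s • y) := by
    have hv1 : g3.val = ((F3.val * g2.val) * (F3⁻¹).val) * (g2⁻¹).val := rfl
    rw [hv1, hg2eq, hF3, uniSL_coe, uniSL_inv_coe, uniSL_coe, uniSL_inv_coe]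
    calc (((1 + vecMulVec e0A (eA a)) * (1 + vecMulVec u (s • y))) *
            (1 - vecMulVec e0A (eA a))) * (1 - vecMulVec u (s • y))
        = (1 + vecMulVec e0A (eA a)) * ((1 + vecMulVec u (s • y)) *
            ((1 - vecMulVec e0A (eA a)) * (1 - vecMulVec u (s • y)))) := by
          simp only [mul_assoc]
      _ = 1 + (eA a ⬝ᵥ u) • vecMulVec e0A (s • y) := by
          rw [main_id e0A (eA a) u (s • y) hae hsyu hsye0]
  have hg3v : g3.val = 1 + (u a) • (s • vecMulVec e0A y) := by
    rw [hg3v', vv_smul_right, heA, single_dotProduct, one_mul]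
  -- membership in gcl α ^ 32
  have hA'g : A' ∈ gcl α := by rw [hA']; exact gcl_conj α Dg⁻¹
  have hg1g : g1 ∈ gcl α ^ 2 := by
    have he1 : g1 = A' * (E * A'⁻¹ * E⁻¹) := by rw [hg1]; group
    rw [he1]
    exact gcl_pow_mul α (gcl_mem_pow_one α hA'g)
      (gcl_mem_pow_one α (gcl_conj_mem α (gcl_inv_mem α hA'g) E))
  have hg2g : g2 ∈ gcl α ^ 4 := by
    have he2 : g2 = g1 * (F2 * g1⁻¹ * F2⁻¹) := by rw [hg2]; group
    rw [he2]
    exact gcl_pow_mul α hg1g (gcl_pow_conj α (gcl_pow_inv α hg1g) F2)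
  have hg3g : g3 ∈ gcl α ^ 8 := by
    have he3 : g3 = (F3 * g2 * F3⁻¹) * g2⁻¹ := hg3
    rw [he3]
    exact gcl_pow_mul α (gcl_pow_conj α hg2g F3) (gcl_pow_inv α hg2g)
  refine ⟨g3, gcl_pow_pad α hg3g (by norm_num), ?_, ?_⟩
  · -- g3 ∈ Uset
    refine ⟨fun j => u a * (s * y j), fun i j => ?_⟩
    have hentry : (g3 : Matrix (Fin n) (Fin n) A) i j
        = (1 : Matrix (Fin n) (Fin n) A) i j + u a * (s * (e0A i * y j)) := by
      rw [hg3v]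
      simp only [Matrix.add_apply, Matrix.smul_apply, vecMulVec_apply, smul_eq_mul]
    rw [hentry]
    show (1 : Matrix (Fin n) (Fin n) A) i j + u a * (s * (e0A i * y j))
        = if i = j then 1 else if i = i0 then u a * (s * y j) else 0
    by_cases hij : i = j
    · subst hij
      rw [if_pos rfl, Matrix.one_apply_eq]
      by_cases hii0 : i = i0
      · subst hii0
        simp [he0A, hyi0]
      · simp [he0A, Pi.single_apply, hii0]
    · rw [if_neg hij, Matrix.one_apply_ne hij]
      by_cases hii0 : i = i0
      · subst hii0
        rw [if_pos rfl]
        simp [he0A]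
      · rw [if_neg hii0]
        simp [he0A, Pi.single_apply, hii0]
  · -- nontrivial mod 𝔮
    intro hcon
    have hval := congrArg (fun g : Matrix.SpecialLinearGroup (Fin n) (A ⧸ 𝔮) => g.val i0 b) hcon
    rw [hmapcoe] at hval
    have hlhs : (g3.val.map φ) i0 b = φ (u a * (s * (- u a))) := by
      rw [Matrix.map_apply, hg3v]
      congr 1
      rw [Matrix.add_apply, Matrix.one_apply_ne (fun hcc => hbi0 hcc.symm),
        Matrix.smul_apply, Matrix.smul_apply, vecMulVec_apply, he0A, Pi.single_eq_same, hyb]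
      simp only [smul_eq_mul, zero_add]
      ring
    rw [hlhs] at hval
    have hrhs : ((1 : Matrix.SpecialLinearGroup (Fin n) (A ⧸ 𝔮)).val) i0 b = 0 := by
      rw [Matrix.SpecialLinearGroup.coe_one, Matrix.one_apply_ne (Ne.symm hbi0)]
    rw [hrhs] at hval
    have : φ (u a) * φ s * φ (u a) = 0 := by
      rw [_root_.map_mul, _root_.map_mul, map_neg] at hval
      linear_combination -hval
    have hsne : φ s ≠ 0 := by rw [hsB]; exact hBq
    exact (mul_ne_zero (mul_ne_zero hua hsne) hua) this
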